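/- Let δ and m be natural numbers with m ≥ 1, and let I_1, …, I_m be nonempty finite integer intervals each of cardinality 2δ + 1. Let 𝒞 be an admissible merging of (I_j)_{j ∈ [m]} with the additional property that every member C of 𝒞 equals the union of those I_j that are contained in C. Then ∑_{C ∈ 𝒞} ⌈|C| / (2δ + 1)⌉ ≤ m. -/

import Mathlib

/-- A finset of integers is an integer interval `[a, b]`. -/
def IsIntIntervalFinset (s : Finset ℤ) : Prop :=
  ∃ a b : ℤ, a ≤ b ∧ s = Finset.Icc a b

/-- `C` is an admissible merging of the finite family `I` of nonempty finite integer
intervals: a finite family of pairwise disjoint nonempty finite integer intervals whose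
union equals `⋃ j, I j`, such that every `I j` is contained in some member of `C`. -/
def IsAdmissibleMerging {J : Type*} [Fintype J] (I : J → Finset ℤ)
    (C : Finset (Finset ℤ)) : Prop :=
  (∀ c ∈ C, IsIntIntervalFinset c ∧ c.Nonempty) ∧
  (C : Set (Finset ℤ)).PairwiseDisjoint id ∧
  C.biUnion id = Finset.univ.biUnion I ∧
  ∀ j : J, ∃ c ∈ C, I j ⊆ c

/-- **Counting bound for the prefix variant of LocalMap.** If `I 1, …, I m` are
nonempty finite integer intervals of cardinality `2δ + 1` each, and `𝒞` is an
admissible merging of them in which every member equals the union of the intervals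
contained in it, then `∑_{C ∈ 𝒞} ⌈|C| / (2δ + 1)⌉ ≤ m`. -/
theorem sum_ceil_card_le {δ m : ℕ} (hm : 1 ≤ m)
    (I : Fin m → Finset ℤ)
    (hI : ∀ j, IsIntIntervalFinset (I j) ∧ (I j).Nonempty ∧ (I j).card = 2 * δ + 1)
    (𝒞 : Finset (Finset ℤ))
    (h𝒞 : IsAdmissibleMerging I 𝒞)
    (hcover : ∀ C ∈ 𝒞, C = (Finset.univ.filter fun j => I j ⊆ C).biUnion I) :
    ∑ C ∈ 𝒞, C.card ⌈/⌉ (2 * δ + 1) ≤ m := by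
  obtain ⟨hmem, hdisj, hun, hcontain⟩ := h𝒞
  set S : Finset ℤ → Finset (Fin m) := fun C => Finset.univ.filter fun j => I j ⊆ C with hS
  have hstep : ∀ C ∈ 𝒞, C.card ⌈/⌉ (2 * δ + 1) ≤ (S C).card := by
    intro C hC
    rw [ceilDiv_le_iff_le_mul (by omega)]
    calc C.card ≤ ∑ j ∈ S C, (I j).card := by
          conv_lhs => rw [hcover C hC]
          exact Finset.card_biUnion_le
      _ = (2 * δ + 1) * (S C).card := by
          rw [Finset.sum_congr rfl (fun j _ => (hI j).2.2)]
          simp [Finset.sum_const, Nat.mul_comm]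
  calc ∑ C ∈ 𝒞, C.card ⌈/⌉ (2 * δ + 1) ≤ ∑ C ∈ 𝒞, (S C).card :=
        Finset.sum_le_sum hstep
    _ = (𝒞.biUnion S).card := by
        rw [Finset.card_biUnion]
        intro C hC C' hC' hne
        rw [Function.onFun, Finset.disjoint_left]
        intro j hj hj'
        simp only [hS, Finset.mem_filter] at hj hj'
        have := hdisj hC hC' hne
        exact (hI j).2.1.ne_empty (disjoint_self.mp (this.mono hj.2 hj'.2))
    _ ≤ m := by simpa using Finset.card_le_univ (𝒞.biUnion S)
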